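/- Let q > 1 and r ≥ 1 be integers and μ₀ = (1-10⁻⁴)^(1/(qr)) · e^(iπ/(2qr)). Then q/2 ≤ 1 + |μ₀^r| + |μ₀^(2r)| + ... + |μ₀^((q-1)r)| ≤ 10 · |1 + μ₀^r + μ₀^(2r) + ... + μ₀^((q-1)r)|. -/

import Mathlib

open Finset

/-- For integers `q > 1`, `r ≥ 1` and
`μ₀ = (1 - 10⁻⁴)^(1/(qr)) · e^(iπ/(2qr))`, we have
`q/2 ≤ ∑_{n=0}^{q-1} |μ₀^(nr)| ≤ 10 · |∑_{n=0}^{q-1} μ₀^(nr)|`. -/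
theorem stmt_1 (q r : ℕ) (hq : 1 < q) (hr : 1 ≤ r) (μ₀ : ℂ)
    (hμ₀ : μ₀ = (((1 - 1/10^4 : ℝ) ^ ((1 : ℝ) / (q * r)) : ℝ) : ℂ) *
      Complex.exp (Complex.I * (Real.pi : ℂ) / (2 * (q : ℂ) * (r : ℂ)))) :
    (q : ℝ) / 2 ≤ ∑ n ∈ Finset.range q, ‖μ₀ ^ (n * r)‖ ∧
    ∑ n ∈ Finset.range q, ‖μ₀ ^ (n * r)‖ ≤ 10 * ‖∑ n ∈ Finset.range q, μ₀ ^ (n * r)‖ := by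
  have hq0 : (0:ℝ) < q := by positivity
  have hqC : (q : ℂ) ≠ 0 := by exact_mod_cast Nat.cast_ne_zero.mpr (by omega)
  have hrC : (r : ℂ) ≠ 0 := by exact_mod_cast Nat.cast_ne_zero.mpr (by omega)
  have hr0 : (r : ℝ) ≠ 0 := by exact_mod_cast Nat.cast_ne_zero.mpr (by omega)
  set x : ℝ := 1 - 1/10^4 with hxdef
  have hx : (0:ℝ) < x := by norm_num [hxdef]
  have hx1 : x ≤ 1 := by norm_num [hxdef]
  have h1 : ∀ n : ℕ, μ₀ ^ (n * r)
      = ((x ^ ((n:ℝ)/q) : ℝ) : ℂ) * Complex.exp (((n * Real.pi / (2*q) : ℝ) : ℂ) * Complex.I) := by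
    intro n
    rw [hμ₀, mul_pow]
    congr 1
    · rw [← Complex.ofReal_pow]
      congr 1
      rw [← Real.rpow_natCast (x ^ ((1:ℝ)/(q*r))) (n*r), ← Real.rpow_mul hx.le]
      congr 1
      push_cast
      field_simp
    · rw [← Complex.exp_nat_mul]
      congr 1
      push_cast
      field_simp
  have hnorm : ∀ n : ℕ, ‖μ₀ ^ (n * r)‖ = x ^ ((n:ℝ)/q) := by
    intro n
    rw [h1 n, norm_mul, Complex.norm_exp_ofReal_mul_I, mul_one, Complex.norm_real,
      Real.norm_eq_abs, abs_of_pos (Real.rpow_pos_of_pos hx _)]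
  have hre : ∀ n : ℕ, (μ₀ ^ (n * r)).re = x ^ ((n:ℝ)/q) * Real.cos (n * Real.pi / (2*q)) := by
    intro n
    rw [h1 n, Complex.re_ofReal_mul, Complex.exp_ofReal_mul_I_re]
  -- pointwise bounds on the modulus
  have hpow_ge : ∀ n ∈ Finset.range q, x ≤ x ^ ((n:ℝ)/q) := by
    intro n hn
    have hn' : (n:ℝ)/q ≤ 1 := by
      rw [div_le_one hq0]
      exact_mod_cast (Finset.mem_range.mp hn).le
    calc x = x ^ (1:ℝ) := (Real.rpow_one x).symm
    _ ≤ x ^ ((n:ℝ)/q) := Real.rpow_le_rpow_of_exponent_ge hx hx1 hn'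
  have hpow_le : ∀ n : ℕ, x ^ ((n:ℝ)/q) ≤ 1 := fun n =>
    Real.rpow_le_one hx.le hx1 (by positivity)
  constructor
  · -- lower bound
    calc (q:ℝ)/2 ≤ (q:ℝ) * x := by
          nlinarith [hq0]
      _ = ∑ _n ∈ Finset.range q, x := by rw [Finset.sum_const, Finset.card_range]; ring
      _ ≤ ∑ n ∈ Finset.range q, ‖μ₀ ^ (n * r)‖ := by
          apply Finset.sum_le_sum
          intro n hn
          rw [hnorm n]
          exact hpow_ge n hn
  · -- upper bound
    have hsum_le : ∑ n ∈ Finset.range q, ‖μ₀ ^ (n * r)‖ ≤ (q:ℝ) := by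
      calc ∑ n ∈ Finset.range q, ‖μ₀ ^ (n * r)‖ ≤ ∑ _n ∈ Finset.range q, (1:ℝ) := by
            apply Finset.sum_le_sum
            intro n _
            rw [hnorm n]; exact hpow_le n
        _ = q := by simp
    -- real parts nonneg
    have hre_nonneg : ∀ n ∈ Finset.range q, 0 ≤ (μ₀ ^ (n * r)).re := by
      intro n hn
      rw [hre n]
      apply mul_nonneg (Real.rpow_pos_of_pos hx _).le
      apply Real.cos_nonneg_of_mem_Icc
      rw [Set.mem_Icc]
      have hang : (0:ℝ) ≤ (n:ℝ) * Real.pi / (2*q) := by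
        have := Real.pi_pos; positivity
      refine ⟨by nlinarith [Real.pi_pos], ?_⟩
      have hn' : (n:ℝ) ≤ q := by exact_mod_cast (Finset.mem_range.mp hn).le
      have := Real.pi_pos
      rw [div_le_div_iff₀ (by positivity) (by norm_num)]
      nlinarith
    set m : ℕ := (q+1)/2 with hm
    have hmq : m ≤ q := by omega
    have hre_big : ∀ n ∈ Finset.range m, (1:ℝ)/2 ≤ (μ₀ ^ (n * r)).re := by
      intro n hn
      rw [hre n]
      have hn2 : 2*n ≤ q := by
        have := Finset.mem_range.mp hn
        omega
      have hangle : (n:ℝ) * Real.pi / (2*q) ≤ Real.pi/4 := by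
        have := Real.pi_pos
        rw [div_le_div_iff₀ (by positivity) (by norm_num)]
        have : (2*(n:ℝ)) ≤ q := by exact_mod_cast hn2
        nlinarith
      have hcos : Real.cos (Real.pi/4) ≤ Real.cos ((n:ℝ) * Real.pi / (2*q)) := by
        apply Real.cos_le_cos_of_nonneg_of_le_pi
        · have := Real.pi_pos; positivity
        · have := Real.pi_pos; linarith
        · exact hangle
      rw [Real.cos_pi_div_four] at hcos
      have hsqrt : (1.4:ℝ) ≤ Real.sqrt 2 := by
        rw [show (1.4:ℝ) = Real.sqrt (1.4^2) by rw [Real.sqrt_sq]; norm_num]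
        apply Real.sqrt_le_sqrt; norm_num
      have hxp : x ≤ x ^ ((n:ℝ)/q) := hpow_ge n (Finset.mem_range.mpr (lt_of_lt_of_le (Finset.mem_range.mp hn) hmq))
      have hcn : (0.7:ℝ) ≤ Real.cos ((n:ℝ) * Real.pi / (2*q)) := by linarith
      have hc1 : Real.cos ((n:ℝ) * Real.pi / (2*q)) ≤ 1 := Real.cos_le_one _
      have hxle : x ^ ((n:ℝ)/q) ≤ 1 := hpow_le n
      nlinarith [Real.rpow_pos_of_pos hx ((n:ℝ)/q)]
    have hre_sum : (q:ℝ)/4 ≤ (∑ n ∈ Finset.range q, μ₀ ^ (n * r)).re := by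
      rw [Complex.re_sum]
      calc (q:ℝ)/4 ≤ (m:ℝ) * (1/2) := by
            have : (q:ℝ) ≤ 2*m := by
              have : q ≤ 2*m := by omega
              exact_mod_cast this
            linarith
        _ = ∑ _n ∈ Finset.range m, (1:ℝ)/2 := by rw [Finset.sum_const, Finset.card_range]; ring
        _ ≤ ∑ n ∈ Finset.range m, (μ₀ ^ (n * r)).re := Finset.sum_le_sum hre_big
        _ ≤ ∑ n ∈ Finset.range q, (μ₀ ^ (n * r)).re := by
            apply Finset.sum_le_sum_of_subset_of_nonneg
            · exact Finset.range_subset_range.mpr hmq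
            · intro n hn _
              exact hre_nonneg n hn
    have hnorm_ge : (q:ℝ)/4 ≤ ‖∑ n ∈ Finset.range q, μ₀ ^ (n * r)‖ := by
      exact hre_sum.trans ((le_abs_self _).trans (Complex.abs_re_le_norm _))
    linarith
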